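/- Torus part of the symplectic Bruhat decomposition (anchor entry): assume r ≥ 2, let X be an r×2m matrix over F whose first column equals x·e_r for some x ∈ F (i.e. X_{k,1} = 0 for k < r and X_{r,1} = x), and let Y ∈ GL_r(F). Then the (2m,1) entry of S(X,Y) equals x² (Y^{-1})_{1,r} = (−1)^{r+1} x² det(Y^{(r−1)})/det(Y), where Y^{(r−1)} denotes the upper-right (r−1)×(r−1) corner submatrix of Y (rows 1,…,r−1 and columns 2,…,r). Consequently, if v_1, v_2 ∈ GL_{2m}(F) are upper-triangular unipotent and t_2 = diag(a_1, …, a_m, a_m^{-1}, …, a_1^{-1}) is an invertible diagonal matrix such that v_2 · S(X,Y) · v_1 = −t_2^{-1} J'_{2m}, then a_1 = (−1)^{r+1} x² det(Y^{(r−1)})/det(Y). -/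

import Mathlib

open Matrix

namespace RS

variable (F : Type*) [Field F]

/-- The matrix `J_k`: its `(i, k+1-i)` entry (1-indexed) is `(-1)^(i-1)`, i.e. in 0-indexed
terms the `(i,j)` entry is `(-1)^i` when `i + j = k - 1`, and all other entries are `0`. -/
def Jmat (k : ℕ) : Matrix (Fin k) (Fin k) F :=
  Matrix.of fun i j => if (i : ℕ) + (j : ℕ) = k - 1 then (-1 : F) ^ (i : ℕ) else 0

/-- A 2×2 block matrix with blocks of sizes `a, b` (rows) and `c, d` (columns), realized on
`Fin (a+b) × Fin (c+d)`. -/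
def blk2 {a b c d : ℕ} (A : Matrix (Fin a) (Fin c) F) (B : Matrix (Fin a) (Fin d) F)
    (C : Matrix (Fin b) (Fin c) F) (D : Matrix (Fin b) (Fin d) F) :
    Matrix (Fin (a + b)) (Fin (c + d)) F :=
  Matrix.of fun i j =>
    if hi : (i : ℕ) < a then
      if hj : (j : ℕ) < c then A ⟨(i : ℕ), hi⟩ ⟨(j : ℕ), hj⟩
      else B ⟨(i : ℕ), hi⟩ ⟨(j : ℕ) - c, by have := j.isLt; omega⟩
    else
      if hj : (j : ℕ) < c then C ⟨(i : ℕ) - a, by have := i.isLt; omega⟩ ⟨(j : ℕ), hj⟩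
      else D ⟨(i : ℕ) - a, by have := i.isLt; omega⟩ ⟨(j : ℕ) - c, by have := j.isLt; omega⟩

/-- A 3×3 block (square) matrix with blocks of sizes `a, b, c`, realized on `Fin (a+b+c)`. -/
def blk3 {a b c : ℕ}
    (A11 : Matrix (Fin a) (Fin a) F) (A12 : Matrix (Fin a) (Fin b) F)
    (A13 : Matrix (Fin a) (Fin c) F)
    (A21 : Matrix (Fin b) (Fin a) F) (A22 : Matrix (Fin b) (Fin b) F)
    (A23 : Matrix (Fin b) (Fin c) F)
    (A31 : Matrix (Fin c) (Fin a) F) (A32 : Matrix (Fin c) (Fin b) F)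
    (A33 : Matrix (Fin c) (Fin c) F) :
    Matrix (Fin (a + b + c)) (Fin (a + b + c)) F :=
  Matrix.of fun i j =>
    if hi1 : (i : ℕ) < a then
      if hj1 : (j : ℕ) < a then A11 ⟨(i : ℕ), hi1⟩ ⟨(j : ℕ), hj1⟩
      else if hj2 : (j : ℕ) < a + b then A12 ⟨(i : ℕ), hi1⟩ ⟨(j : ℕ) - a, by omega⟩
      else A13 ⟨(i : ℕ), hi1⟩ ⟨(j : ℕ) - (a + b), by have := j.isLt; omega⟩
    else if hi2 : (i : ℕ) < a + b then
      if hj1 : (j : ℕ) < a then A21 ⟨(i : ℕ) - a, by omega⟩ ⟨(j : ℕ), hj1⟩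
      else if hj2 : (j : ℕ) < a + b then A22 ⟨(i : ℕ) - a, by omega⟩ ⟨(j : ℕ) - a, by omega⟩
      else A23 ⟨(i : ℕ) - a, by omega⟩ ⟨(j : ℕ) - (a + b), by have := j.isLt; omega⟩
    else
      if hj1 : (j : ℕ) < a then A31 ⟨(i : ℕ) - (a + b), by have := i.isLt; omega⟩ ⟨(j : ℕ), hj1⟩
      else if hj2 : (j : ℕ) < a + b then
        A32 ⟨(i : ℕ) - (a + b), by have := i.isLt; omega⟩ ⟨(j : ℕ) - a, by omega⟩
      else A33 ⟨(i : ℕ) - (a + b), by have := i.isLt; omega⟩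
        ⟨(j : ℕ) - (a + b), by have := j.isLt; omega⟩

/-- `J'_{2k}`, the `2k×2k` block matrix `[[0, J_k], [-J_kᵀ, 0]]`. -/
def Jp (k : ℕ) : Matrix (Fin (k + k)) (Fin (k + k)) F :=
  blk2 F 0 (Jmat F k) (-(Jmat F k)ᵀ) 0

/-- `Sp_{2N}(F) = {h ∈ GL_{2N}(F) : hᵀ J'_{2N} h = J'_{2N}}`. -/
def Sp (N : ℕ) : Set (Matrix (Fin (N + N)) (Fin (N + N)) F) :=
  {h | IsUnit h ∧ hᵀ * Jp F N * h = Jp F N}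

/-- `θ_r(g) = J_r (g⁻¹)ᵀ J_r⁻¹`. -/
noncomputable def theta (r : ℕ) (g : Matrix (Fin r) (Fin r) F) : Matrix (Fin r) (Fin r) F :=
  Jmat F r * (g⁻¹)ᵀ * (Jmat F r)⁻¹

/-- `θ_{r,m}(X) = (-1)^r J'_{2m} Xᵀ J_r`. -/
def thetaRM (r m : ℕ) (X : Matrix (Fin r) (Fin (m + m)) F) : Matrix (Fin (m + m)) (Fin r) F :=
  (-1 : F) ^ r • (Jp F m * Xᵀ * Jmat F r)

/-- `n(X,Y) = [[I_r, X, Y], [0, I_{2m}, θ_{r,m}(X)], [0, 0, I_r]]` (block sizes `r, 2m, r`). -/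
def nMat (r m : ℕ) (X : Matrix (Fin r) (Fin (m + m)) F) (Y : Matrix (Fin r) (Fin r) F) :
    Matrix (Fin (r + (m + m) + r)) (Fin (r + (m + m) + r)) F :=
  blk3 F 1 X Y 0 1 (thetaRM F r m X) 0 0 1

/-- `n̄(X,Y) = [[I_r, 0, 0], [(-1)^r J'_{2m} Xᵀ J_r, I_{2m}, 0], [(-1)^r Y, (-1)^r X, I_r]]`. -/
def nbarMat (r m : ℕ) (X : Matrix (Fin r) (Fin (m + m)) F) (Y : Matrix (Fin r) (Fin r) F) :
    Matrix (Fin (r + (m + m) + r)) (Fin (r + (m + m) + r)) F :=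
  blk3 F 1 0 0 ((-1 : F) ^ r • (Jp F m * Xᵀ * Jmat F r)) 1 0
    ((-1 : F) ^ r • Y) ((-1 : F) ^ r • X) 1

/-- `ẇ_0 = [[0, 0, I_r], [0, I_{2m}, 0], [(-1)^r I_r, 0, 0]]`. -/
def w0 (r m : ℕ) : Matrix (Fin (r + (m + m) + r)) (Fin (r + (m + m) + r)) F :=
  blk3 F 0 0 1 0 1 0 ((-1 : F) ^ r • (1 : Matrix (Fin r) (Fin r) F)) 0 0

/-- `S(X,Y) = I_{2m} - J'_{2m} Xᵀ (Y⁻¹)ᵀ J_r X`. -/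
noncomputable def Smat (r m : ℕ) (X : Matrix (Fin r) (Fin (m + m)) F) (Y : Matrix (Fin r) (Fin r) F) :
    Matrix (Fin (m + m)) (Fin (m + m)) F :=
  1 - Jp F m * Xᵀ * (Y⁻¹)ᵀ * Jmat F r * X

/-- The block diagonal matrix `diag(m₁, m₂, θ_r(m₁))`. -/
noncomputable def levi (r m : ℕ) (m1 : Matrix (Fin r) (Fin r) F)
    (m2 : Matrix (Fin (m + m)) (Fin (m + m)) F) :
    Matrix (Fin (r + (m + m) + r)) (Fin (r + (m + m) + r)) F :=
  blk3 F m1 0 0 0 m2 0 0 0 (theta F r m1)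

/-- `m(X,Y) = diag(θ_r(Y), S(X,Y)⁻¹, Y)`. -/
noncomputable def mMat (r m : ℕ) (X : Matrix (Fin r) (Fin (m + m)) F) (Y : Matrix (Fin r) (Fin r) F) :
    Matrix (Fin (r + (m + m) + r)) (Fin (r + (m + m) + r)) F :=
  blk3 F (theta F r Y) 0 0 0 (Smat F r m X Y)⁻¹ 0 0 0 Y

/-- `α^∨(t) = diag(t·I_r, I_{2m}, t⁻¹·I_r)`. -/
def coroot (r m : ℕ) (t : Fˣ) :
    Matrix (Fin (r + (m + m) + r)) (Fin (r + (m + m) + r)) F :=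
  blk3 F ((t : F) • (1 : Matrix (Fin r) (Fin r) F)) 0 0 0 1 0 0 0
    (((t⁻¹ : Fˣ) : F) • (1 : Matrix (Fin r) (Fin r) F))

/-- Transport of a `2n×2n` matrix written with block sizes `(r, 2m, r)` to the canonical
index type `Fin ((r+m)+(r+m))` (where `n = r + m`), along the obvious cast. -/
def toSp (r m : ℕ) (M : Matrix (Fin (r + (m + m) + r)) (Fin (r + (m + m) + r)) F) :
    Matrix (Fin ((r + m) + (r + m))) (Fin ((r + m) + (r + m))) F :=
  Matrix.reindex (finCongr (by omega)) (finCongr (by omega)) M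

/-- Upper-triangular unipotent matrices. -/
def UTU {k : ℕ} (u : Matrix (Fin k) (Fin k) F) : Prop :=
  (∀ i, u i i = 1) ∧ ∀ i j : Fin k, (j : ℕ) < (i : ℕ) → u i j = 0

/-- A row vector as a `1 × k` matrix. -/
def rowVec {k : ℕ} (v : Fin k → F) : Matrix (Fin 1) (Fin k) F := Matrix.of fun _ j => v j

/-- A column vector as a `k × 1` matrix. -/
def colVec {k : ℕ} (v : Fin k → F) : Matrix (Fin k) (Fin 1) F := Matrix.of fun i _ => v i

/-- A scalar as a `1 × 1` matrix. -/
def scMat (x : F) : Matrix (Fin 1) (Fin 1) F := Matrix.of fun _ _ => x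

/-- `Y_i`: the lower-left `i×i` corner submatrix of `Y` (rows `r-i+1,…,r`, columns `1,…,i`,
1-indexed). -/
def llCorner (r : ℕ) (Y : Matrix (Fin r) (Fin r) F) (i : ℕ) (h : i ≤ r) :
    Matrix (Fin i) (Fin i) F :=
  Matrix.of fun a b =>
    Y ⟨r - i + (a : ℕ), by have := a.isLt; omega⟩ ⟨(b : ℕ), by have := b.isLt; omega⟩

/-- `Y^{(r-1)}`: the upper-right `(r-1)×(r-1)` corner submatrix of `Y` (rows `1,…,r-1`,
columns `2,…,r`, 1-indexed). -/
def urCorner (r : ℕ) (Y : Matrix (Fin r) (Fin r) F) :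
    Matrix (Fin (r - 1)) (Fin (r - 1)) F :=
  Matrix.of fun a b =>
    Y ⟨(a : ℕ), by have := a.isLt; omega⟩ ⟨(b : ℕ) + 1, by have := b.isLt; omega⟩

/-- `J₀`: the central `(2m-2)×(2m-2)` submatrix of `J'_{2m}` (rows and columns `2,…,2m-1`). -/
def J0 (m : ℕ) : Matrix (Fin (m + m - 2)) (Fin (m + m - 2)) F :=
  Matrix.of fun i j =>
    Jp F m ⟨(i : ℕ) + 1, by have := i.isLt; omega⟩ ⟨(j : ℕ) + 1, by have := j.isLt; omega⟩

/-- `diag(t₁,…,t_n, t_n⁻¹,…,t₁⁻¹)` (with `n = r + m`), realized on the index type with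
block sizes `(r, 2m, r)`. -/
def torus (r m : ℕ) (t : Fin (r + m) → Fˣ) :
    Matrix (Fin (r + (m + m) + r)) (Fin (r + (m + m) + r)) F :=
  Matrix.diagonal fun i =>
    if h : (i : ℕ) < r + m then ((t ⟨(i : ℕ), h⟩ : Fˣ) : F)
    else (((t ⟨r + (m + m) + r - 1 - (i : ℕ), by have := i.isLt; omega⟩)⁻¹ : Fˣ) : F)

/-- `Y_{i,j}`: the `(j-1)×(j-1)` submatrix of `Y` on the rows `{r-j+1,…,r} \ {r-i+1}` and the
columns `1,…,j-1` (all 1-indexed). -/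
def subDelRow (r : ℕ) (Y : Matrix (Fin r) (Fin r) F) (i j : ℕ)
    (hi : 1 ≤ i) (hij : i < j) (hj : j ≤ r) : Matrix (Fin (j - 1)) (Fin (j - 1)) F :=
  Matrix.of fun a b =>
    Y (if h : r - j + (a : ℕ) < r - i then
          (⟨r - j + (a : ℕ), by have := a.isLt; omega⟩ : Fin r)
        else (⟨r - j + (a : ℕ) + 1, by have := a.isLt; omega⟩ : Fin r))
      ⟨(b : ℕ), by have := b.isLt; omega⟩

/-- `Y'_{i,j}`: the `(r-i)×(r-i)` submatrix of `Y` on the rows `i+1,…,r` and the columns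
`{1,…,r-i+1} \ {r-j+1}` (all 1-indexed). -/
def subDelCol (r : ℕ) (Y : Matrix (Fin r) (Fin r) F) (i j : ℕ)
    (hi : 1 ≤ i) (hij : i < j) (hj : j ≤ r) : Matrix (Fin (r - i)) (Fin (r - i)) F :=
  Matrix.of fun a b =>
    Y ⟨i + (a : ℕ), by have := a.isLt; omega⟩
      (if h : (b : ℕ) < r - j then (⟨(b : ℕ), by have := b.isLt; omega⟩ : Fin r)
        else (⟨(b : ℕ) + 1, by have := b.isLt; omega⟩ : Fin r))


lemma JpL (m : ℕ) (hm : 1 ≤ m) (j : Fin (m+m)) :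
    Jp F m ⟨m+m-1, by have := 0; omega⟩ j = if (j:ℕ) = 0 then -1 else 0 := by
  simp only [Jp, blk2, of_apply]
  rw [dif_neg (by omega : ¬ (m+m-1 < m))]
  split_ifs with h1 h2 h2
  · simp only [Matrix.neg_apply, transpose_apply, Jmat, of_apply]
    rw [if_pos (by omega), h2]; simp
  · simp only [Matrix.neg_apply, transpose_apply, Jmat, of_apply]
    rw [if_neg (by omega)]; simp
  · omega
  · simp

lemma JmatCol (r : ℕ) (hr : 2 ≤ r) (i : Fin r) :
    Jmat F r i ⟨r-1, by have := 0; omega⟩ = if (i:ℕ) = 0 then 1 else 0 := by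
  simp only [Jmat, of_apply]
  split_ifs with h1 h2 h2
  · rw [h2]; simp
  · omega
  · omega
  · rfl

lemma SEntry (r m : ℕ) (hr : 2 ≤ r) (hm : 1 ≤ m)
    (x : F) (X : Matrix (Fin r) (Fin (m + m)) F)
    (hX : ∀ k : Fin r, X k ⟨0, by have := 0; omega⟩ = if (k : ℕ) = r - 1 then x else 0)
    (Y : Matrix (Fin r) (Fin r) F) :
    Smat F r m X Y ⟨m + m - 1, by have := 0; omega⟩ ⟨0, by have := 0; omega⟩ =
      x ^ 2 * Y⁻¹ ⟨0, by have := 0; omega⟩ ⟨r - 1, by have := 0; omega⟩ := by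
  have hJpXt : ∀ k : Fin r, (Jp F m * Xᵀ) ⟨m+m-1, by omega⟩ k =
      if (k:ℕ) = r-1 then -x else 0 := by
    intro k
    rw [mul_apply, Fintype.sum_eq_single (⟨0, by omega⟩ : Fin (m+m))]
    · rw [JpL F m hm, if_pos rfl, transpose_apply, hX k]
      split_ifs <;> ring
    · intro j hj
      rw [JpL F m hm, if_neg (by simpa [Fin.ext_iff] using hj)]
      ring
  have hR : (Jp F m * Xᵀ * (Y⁻¹)ᵀ) ⟨m+m-1, by omega⟩ ⟨0, by omega⟩ =
      -x * Y⁻¹ ⟨0, by omega⟩ ⟨r-1, by omega⟩ := by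
    rw [mul_apply, Fintype.sum_eq_single (⟨r-1, by omega⟩ : Fin r)]
    · rw [hJpXt, if_pos rfl, transpose_apply]
    · intro k hk
      rw [hJpXt, if_neg (by simpa [Fin.ext_iff] using hk)]
      ring
  have hQ : (Jp F m * Xᵀ * (Y⁻¹)ᵀ * Jmat F r) ⟨m+m-1, by omega⟩ ⟨r-1, by omega⟩ =
      -x * Y⁻¹ ⟨0, by omega⟩ ⟨r-1, by omega⟩ := by
    rw [mul_apply, Fintype.sum_eq_single (⟨0, by omega⟩ : Fin r)]
    · rw [JmatCol F r hr, if_pos rfl, hR]; ring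
    · intro i hi
      rw [JmatCol F r hr, if_neg (by simpa [Fin.ext_iff] using hi)]
      ring
  have hP : (Jp F m * Xᵀ * (Y⁻¹)ᵀ * Jmat F r * X) ⟨m+m-1, by omega⟩ ⟨0, by omega⟩ =
      -(x ^ 2 * Y⁻¹ ⟨0, by omega⟩ ⟨r-1, by omega⟩) := by
    rw [mul_apply, Fintype.sum_eq_single (⟨r-1, by omega⟩ : Fin r)]
    · rw [hQ, hX, if_pos rfl]; ring
    · intro k hk
      rw [hX k, if_neg (by simpa [Fin.ext_iff] using hk)]
      ring
  rw [Smat, Matrix.sub_apply, hP, one_apply_ne (by simp [Fin.ext_iff]; omega)]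
  ring

lemma invEntry (r : ℕ) (hr : 2 ≤ r) (Y : Matrix (Fin r) (Fin r) F) (hY : IsUnit Y) :
    Y⁻¹ ⟨0, by have := 0; omega⟩ ⟨r - 1, by have := 0; omega⟩ =
      (-1 : F) ^ (r + 1) * (urCorner F r Y).det / Y.det := by
  obtain ⟨r', rfl⟩ : ∃ r', r = r' + 1 := ⟨r - 1, by omega⟩
  have hdet : IsUnit Y.det := (Matrix.isUnit_iff_isUnit_det Y).mp hY
  rw [Matrix.inv_def, Ring.inverse_eq_inv', Matrix.smul_apply, Matrix.adjugate_apply,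
    smul_eq_mul]
  have h0 : (⟨r' + 1 - 1, by omega⟩ : Fin (r'+1)) = Fin.last r' := by
    simp [Fin.ext_iff]
  have h1 : (⟨0, by omega⟩ : Fin (r'+1)) = (0 : Fin (r'+1)) := rfl
  rw [h0, h1]
  have hsub : (Y.updateRow (Fin.last r') (Pi.single 0 1)).submatrix
      (Fin.last r').succAbove (Fin.succAbove 0) = urCorner F (r'+1) Y := by
    ext a b
    rw [Matrix.submatrix_apply, Fin.succAbove_last, Fin.succAbove_zero,
      Matrix.updateRow_ne (by simp [Fin.ext_iff]; omega)]
    rfl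
  have key : (Y.updateRow (Fin.last r') (Pi.single 0 1)).det
      = (-1:F)^r' * (urCorner F (r'+1) Y).det := by
    rw [Matrix.det_succ_row _ (Fin.last r')]
    rw [Fintype.sum_eq_single (0 : Fin (r'+1))]
    · rw [hsub]
      simp only [Matrix.updateRow_self, Fin.val_last, Fin.val_zero, Nat.add_zero,
        Pi.single_eq_same, mul_one]
    · intro j hj
      rw [Matrix.updateRow_self, Pi.single_eq_of_ne hj]
      ring
  rw [key]
  have hpow : (-1:F)^(r'+1+1) = (-1:F)^r' := by
    rw [pow_succ, pow_succ]; ring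
  rw [hpow]
  have hd : Y.det ≠ 0 := hdet.ne_zero
  field_simp

lemma part3 (m : ℕ) (hm : 1 ≤ m) (S v1 v2 : Matrix (Fin (m+m)) (Fin (m+m)) F)
    (d : Fin (m+m) → F) (hd : ∀ i, d i ≠ 0)
    (hv1 : UTU F v1) (hv2 : UTU F v2)
    (heq : v2 * S * v1 = -((Matrix.diagonal d)⁻¹ * Jp F m)) :
    d ⟨m+m-1, by have := 0; omega⟩ * S ⟨m+m-1, by have := 0; omega⟩ ⟨0, by have := 0; omega⟩ = 1 := by
  have hdet : IsUnit (Matrix.diagonal d).det := by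
    rw [Matrix.det_diagonal, isUnit_iff_ne_zero]
    exact Finset.prod_ne_zero_iff.mpr fun i _ => hd i
  have hmul : Matrix.diagonal d * (v2 * S * v1) = -(Jp F m) := by
    rw [heq, mul_neg, ← Matrix.mul_assoc, Matrix.mul_nonsing_inv _ hdet, Matrix.one_mul]
  have hM : (v2 * S * v1) ⟨m+m-1, by omega⟩ ⟨0, by omega⟩ =
      S ⟨m+m-1, by omega⟩ ⟨0, by omega⟩ := by
    have hSv1 : ∀ i : Fin (m+m), (S * v1) i ⟨0, by omega⟩ = S i ⟨0, by omega⟩ := by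
      intro i
      rw [mul_apply, Fintype.sum_eq_single (⟨0, by omega⟩ : Fin (m+m))]
      · rw [hv1.1, mul_one]
      · intro j hj
        rw [hv1.2 j ⟨0, by omega⟩ (by simp [Fin.ext_iff] at hj ⊢; omega), mul_zero]
    rw [Matrix.mul_assoc, mul_apply, Fintype.sum_eq_single (⟨m+m-1, by omega⟩ : Fin (m+m))]
    · rw [hv2.1, one_mul, hSv1]
    · intro i hi
      rw [hv2.2 ⟨m+m-1, by omega⟩ i (by simp [Fin.ext_iff] at hi ⊢; have := i.isLt; omega),
        zero_mul]
  have h := congrFun (congrFun hmul ⟨m+m-1, by omega⟩) ⟨0, by omega⟩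
  rw [Matrix.diagonal_mul, hM, Matrix.neg_apply, JpL F m hm, if_pos rfl] at h
  rw [h]; ring

/-- Torus part of the symplectic Bruhat decomposition (anchor entry). -/
theorem symplectic_anchor_entry (r m : ℕ) (hr : 2 ≤ r) (hm : 1 ≤ m)
    (x : F) (X : Matrix (Fin r) (Fin (m + m)) F)
    (hX : ∀ k : Fin r, X k ⟨0, by omega⟩ = if (k : ℕ) = r - 1 then x else 0)
    (Y : Matrix (Fin r) (Fin r) F) (hY : IsUnit Y) :
    Smat F r m X Y ⟨m + m - 1, by omega⟩ ⟨0, by omega⟩ =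
      x ^ 2 * Y⁻¹ ⟨0, by omega⟩ ⟨r - 1, by omega⟩ ∧
    Smat F r m X Y ⟨m + m - 1, by omega⟩ ⟨0, by omega⟩ =
      (-1 : F) ^ (r + 1) * x ^ 2 * (urCorner F r Y).det / Y.det ∧
    (∀ (v1 v2 : Matrix (Fin (m + m)) (Fin (m + m)) F) (a : Fin m → Fˣ),
      UTU F v1 → UTU F v2 →
      v2 * Smat F r m X Y * v1 =
        -((Matrix.diagonal fun i : Fin (m + m) =>
            if h : (i : ℕ) < m then ((a ⟨(i : ℕ), h⟩ : Fˣ) : F)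
            else (((a ⟨m + m - 1 - (i : ℕ), by have := i.isLt; omega⟩)⁻¹ : Fˣ) : F))⁻¹ *
          Jp F m) →
      ((a ⟨0, by omega⟩ : Fˣ) : F) =
        (-1 : F) ^ (r + 1) * x ^ 2 * (urCorner F r Y).det / Y.det) := by
  have h1 := SEntry F r m hr hm x X hX Y
  have h2 : Smat F r m X Y ⟨m + m - 1, by omega⟩ ⟨0, by omega⟩ =
      (-1 : F) ^ (r + 1) * x ^ 2 * (urCorner F r Y).det / Y.det := by
    rw [h1, invEntry F r hr Y hY]; ring
  refine ⟨h1, h2, ?_⟩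
  intro v1 v2 a hv1 hv2 heq
  have hd : ∀ i : Fin (m+m), (if h : (i : ℕ) < m then ((a ⟨(i : ℕ), h⟩ : Fˣ) : F)
      else (((a ⟨m + m - 1 - (i : ℕ), by have := i.isLt; omega⟩)⁻¹ : Fˣ) : F)) ≠ 0 := by
    intro i
    split_ifs <;> exact Units.ne_zero _
  have key := part3 F m hm (Smat F r m X Y) v1 v2 _ hd hv1 hv2 heq
  rw [dif_neg (by omega : ¬ (m+m-1 < m))] at key
  have hidx : (⟨m + m - 1 - (m+m-1), by omega⟩ : Fin m) = ⟨0, by omega⟩ := by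
    simp [Fin.ext_iff]
  rw [hidx] at key
  have : Smat F r m X Y ⟨m + m - 1, by omega⟩ ⟨0, by omega⟩ = ((a ⟨0, by omega⟩ : Fˣ) : F) := by
    have := congrArg (fun y => ((a ⟨0, by omega⟩ : Fˣ) : F) * y) key
    simp only [mul_one] at this
    rw [← this, ← mul_assoc]
    norm_cast
    rw [mul_inv_cancel]
    simp
  rw [← this, h2]

end RS
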